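/- If m and n are positive integers with δ(n) = δ(m), then ‖n‖ ≡ ‖m‖ (mod 3). -/

import Mathlib

/-- `CanWrite n k`: `n` can be written using exactly `k` ones with `+` and `*`. -/
inductive CanWrite : ℕ → ℕ → Prop
  | one : CanWrite 1 1
  | add {a b j k : ℕ} : CanWrite a j → CanWrite b k → CanWrite (a + b) (j + k)
  | mul {a b j k : ℕ} : CanWrite a j → CanWrite b k → CanWrite (a * b) (j + k)

/-- Integer complexity: least number of ones needed to write `n`. -/
noncomputable def cpx (n : ℕ) : ℕ := sInf {k | CanWrite n k}

/-- The defect `δ(n) = ‖n‖ − 3·log₃ n`. -/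
noncomputable def defect (n : ℕ) : ℝ := (cpx n : ℝ) - 3 * Real.logb 3 n

/-- `n` is stable if `‖3^k n‖ = 3k + ‖n‖` for all `k`. -/
def Stable (n : ℕ) : Prop := ∀ k : ℕ, cpx (3 ^ k * n) = 3 * k + cpx n

/-- Stable complexity `‖n‖_st = min_{k≥0} (‖3^k n‖ − 3k)`. -/
noncomputable def cpxSt (n : ℕ) : ℕ := sInf {m | ∃ k : ℕ, cpx (3 ^ k * n) = m + 3 * k}

/-- Stable defect `δ_st(n) = ‖n‖_st − 3·log₃ n`. -/
noncomputable def defectSt (n : ℕ) : ℝ := (cpxSt n : ℝ) - 3 * Real.logb 3 n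

lemma aux_dvd (m n d : ℕ) (hm : 0 < m) (hn : 0 < n) (h : n ^ 3 = 3 ^ d * m ^ 3) : 3 ∣ d := by
  have h3 : Fact (Nat.Prime 3) := ⟨by norm_num⟩
  have hv := congrArg (padicValNat 3) h
  rw [padicValNat.mul (pow_ne_zero _ (by norm_num)) (pow_ne_zero _ hm.ne'),
    padicValNat.prime_pow, padicValNat.pow n, padicValNat.pow m] at hv
  omega

theorem defect_eq_cpx_mod_three (m n : ℕ) (hm : 0 < m) (hn : 0 < n)
    (h : defect n = defect m) : cpx n ≡ cpx m [MOD 3] := by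
  have hlog3 : (0:ℝ) < Real.log 3 := Real.log_pos (by norm_num)
  set a := cpx n with ha
  set b := cpx m with hb
  have hn' : (0:ℝ) < n := by exact_mod_cast hn
  have hm' : (0:ℝ) < m := by exact_mod_cast hm
  have key : ((a:ℝ) - b) * Real.log 3 = 3 * Real.log n - 3 * Real.log m := by
    unfold defect Real.logb at h
    rw [← ha, ← hb] at h
    field_simp at h
    nlinarith [h]
  have hL : Real.log ((n:ℝ) ^ 3) = Real.log ((3:ℝ) ^ ((a:ℤ) - (b:ℤ)) * (m:ℝ) ^ 3) := by
    rw [Real.log_pow, Real.log_mul (by positivity) (by positivity), Real.log_zpow, Real.log_pow]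
    push_cast
    linarith
  have heq : (n:ℝ) ^ 3 = (3:ℝ) ^ ((a:ℤ) - (b:ℤ)) * (m:ℝ) ^ 3 :=
    Real.log_injOn_pos (Set.mem_Ioi.mpr (by positivity)) (Set.mem_Ioi.mpr (by positivity)) hL
  rcases le_total b a with hd | hd
  · have hcast : ((a:ℤ) - (b:ℤ)) = ((a - b : ℕ) : ℤ) := by omega
    rw [hcast, zpow_natCast] at heq
    have hnat : n ^ 3 = 3 ^ (a - b) * m ^ 3 := by exact_mod_cast heq
    have hdvd : 3 ∣ a - b := aux_dvd m n _ hm hn hnat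
    rw [Nat.modEq_iff_dvd]
    omega
  · have h2 : (m:ℝ) ^ 3 = (3:ℝ) ^ (b - a) * (n:ℝ) ^ 3 := by
      rw [heq, ← mul_assoc, ← zpow_natCast (3:ℝ) (b - a),
        ← zpow_add₀ (by norm_num : (3:ℝ) ≠ 0)]
      have hz : ((b - a : ℕ) : ℤ) + ((a:ℤ) - (b:ℤ)) = 0 := by omega
      rw [hz, zpow_zero, one_mul]
    have hnat : m ^ 3 = 3 ^ (b - a) * n ^ 3 := by exact_mod_cast h2
    have hdvd : 3 ∣ b - a := aux_dvd n m _ hn hm hnat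
    rw [Nat.modEq_iff_dvd]
    omega
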